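/- The kernel of the cyclic symmetrization C on K⟨n⟩ equals K·1 + [K⟨n⟩, K⟨n⟩]: a polynomial P satisfies C P = 0 if and only if P is the sum of a scalar and a linear combination of commutators [a,b] = ab − ba with a, b ∈ K⟨n⟩. -/

import Mathlib

/-! Setup: the free associative algebra `K⟨X_1,…,X_n⟩` realized as the monoid
algebra of the free monoid on `Fin n`, together with the partial cyclic
derivatives `δ_j`, the number operator `N` and the cyclic symmetrization `C`. -/

noncomputable section

set_option linter.unusedSectionVars false

/-- `K⟨n⟩`, the ring of polynomials in `n` noncommuting indeterminates. -/
abbrev FreePoly (K : Type) [CommSemiring K] (n : ℕ) : Type :=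
  MonoidAlgebra K (FreeMonoid (Fin n))

/-- The monomial `X_{i_1} ⋯ X_{i_p}` associated to the word `w = [i_1,…,i_p]`. -/
def mono (K : Type) [Field K] {n : ℕ} (w : List (Fin n)) : FreePoly K n :=
  MonoidAlgebra.single (FreeMonoid.ofList w) 1

/-- The indeterminate `X k`. -/
def Xvar (K : Type) [Field K] {n : ℕ} (k : Fin n) : FreePoly K n := mono K [k]

variable {K : Type} [Field K] [CharZero K] {n : ℕ}

/-- The partial cyclic derivative `δ_j = μ̃ ∘ ∂_j`: on a monomial
`X_{i_0} ⋯ X_{i_s}` it gives `∑_{p : i_p = j} X_{i_{p+1}} ⋯ X_{i_s} X_{i_0} ⋯ X_{i_{p-1}}`. -/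
def cycDeriv (j : Fin n) : FreePoly K n →ₗ[K] FreePoly K n :=
  (Finsupp.lsum K fun w => LinearMap.toSpanSingleton K _
    (∑ p : Fin (FreeMonoid.toList w).length,
      if (FreeMonoid.toList w).get p = j then
        mono K ((FreeMonoid.toList w).drop (p + 1) ++ (FreeMonoid.toList w).take p)
      else 0)) ∘ₗ
    (MonoidAlgebra.coeffLinearEquiv K).toLinearMap

/-- The number operator `N`, multiplying a monomial by its degree. -/
def numOp : FreePoly K n →ₗ[K] FreePoly K n :=
  (Finsupp.lsum K fun w => LinearMap.toSpanSingleton K _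
    ((FreeMonoid.toList w).length • mono K (FreeMonoid.toList w))) ∘ₗ
    (MonoidAlgebra.coeffLinearEquiv K).toLinearMap

/-- The cyclic symmetrization `C`, sending a monomial of degree `p ≥ 1` to the
sum of its `p` cyclic rotations (and `1` to `0`). -/
def cycSym : FreePoly K n →ₗ[K] FreePoly K n :=
  (Finsupp.lsum K fun w => LinearMap.toSpanSingleton K _
    (∑ p ∈ Finset.range (FreeMonoid.toList w).length,
      mono K ((FreeMonoid.toList w).rotate (p + 1)))) ∘ₗ
    (MonoidAlgebra.coeffLinearEquiv K).toLinearMap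

/-! Auxiliary lemmas -/

lemma cycSym_mono (w : List (Fin n)) :
    cycSym (mono K w) = ∑ p ∈ Finset.range w.length, mono K (w.rotate (p + 1)) := by
  rw [cycSym, mono, LinearMap.comp_apply, LinearEquiv.coe_coe]
  erw [Finsupp.lsum_single]
  simp [LinearMap.toSpanSingleton_apply, mono]

lemma numOp_mono (w : List (Fin n)) :
    numOp (mono K w) = w.length • mono K w := by
  rw [numOp, mono, LinearMap.comp_apply, LinearEquiv.coe_coe]
  erw [Finsupp.lsum_single]
  simp [LinearMap.toSpanSingleton_apply, mono]

lemma mono_mul (u v : List (Fin n)) : mono K u * mono K v = mono K (u ++ v) := by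
  simp [mono, MonoidAlgebra.single_mul_single, FreeMonoid.ofList_append]

lemma single_eq_smul_mono (w : FreeMonoid (Fin n)) (c : K) :
    (MonoidAlgebra.single w c : FreePoly K n) = c • mono K (FreeMonoid.toList w) := by
  rw [mono, MonoidAlgebra.smul_single', mul_one]; rfl

/-- shift a sum over `range L` of a function with `h L = h 0` by one -/
lemma sum_range_shift {M : Type*} [AddCommGroup M] (h : ℕ → M) (L : ℕ) (hp : h L = h 0) :
    ∑ p ∈ Finset.range L, h (p + 1) = ∑ p ∈ Finset.range L, h p := by
  have h1 := Finset.sum_range_succ h L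
  have h2 := Finset.sum_range_succ' h L
  rw [h1, hp] at h2
  exact add_right_cancel h2.symm

lemma rotate_add_len (w : List (Fin n)) (t : ℕ) :
    w.rotate (t + w.length) = w.rotate t := by
  rw [← List.rotate_rotate]
  have : (w.rotate t).length = w.length := w.length_rotate t
  rw [← this, List.rotate_length]

lemma cycSym_mono_rotate_one (w : List (Fin n)) :
    cycSym (mono K (w.rotate 1)) = cycSym (mono K w) := by
  rw [cycSym_mono, cycSym_mono, w.length_rotate 1]
  calc ∑ p ∈ Finset.range w.length, mono K ((w.rotate 1).rotate (p + 1))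
      = ∑ p ∈ Finset.range w.length, (fun t => mono K (w.rotate (t + 1))) (p + 1) := by
        refine Finset.sum_congr rfl fun p _ => ?_
        simp only [List.rotate_rotate]
        have h1 : 1 + (p + 1) = p + 1 + 1 := by omega
        rw [h1]
    _ = ∑ p ∈ Finset.range w.length, mono K (w.rotate (p + 1)) := by
        apply sum_range_shift (fun t => mono K (w.rotate (t + 1)))
        simp only [zero_add]
        rw [show w.length + 1 = 1 + w.length by ring, rotate_add_len]

lemma cycSym_mono_rotate (w : List (Fin n)) (s : ℕ) :
    cycSym (mono K (w.rotate s)) = cycSym (mono K w) := by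
  induction s with
  | zero => rw [List.rotate_zero]
  | succ s ih => rw [← List.rotate_rotate, cycSym_mono_rotate_one, ih]

lemma cycSym_mono_append (u v : List (Fin n)) :
    cycSym (mono K (u ++ v)) = cycSym (mono K (v ++ u)) := by
  have h : v ++ u = (u ++ v).rotate u.length := by
    rw [List.rotate_eq_drop_append_take (by simp)]; simp
  rw [h, cycSym_mono_rotate]

lemma cycSym_comm (a b : FreePoly K n) : cycSym (a * b) = cycSym (b * a) := by
  induction a using MonoidAlgebra.induction_linear with
  | zero => simp
  | add x y hx hy => rw [add_mul, mul_add, map_add, map_add, hx, hy]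
  | single u c =>
    induction b using MonoidAlgebra.induction_linear with
    | zero => simp
    | add x y hx hy => rw [add_mul, mul_add, map_add, map_add, hx, hy]
    | single v d =>
      rw [single_eq_smul_mono u c, single_eq_smul_mono v d,
        smul_mul_assoc, mul_smul_comm, smul_mul_assoc, mul_smul_comm,
        map_smul, map_smul, map_smul, map_smul, mono_mul, mono_mul,
        cycSym_mono_append, smul_comm]

lemma cycSym_one : cycSym (1 : FreePoly K n) = 0 := by
  have h : (1 : FreePoly K n) = mono K [] := rfl
  rw [h, cycSym_mono]
  simp

/-- The set of differences of a monomial and one of its rotations. -/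
def rotSet (K : Type) [Field K] (n : ℕ) : Set (FreePoly K n) :=
  {x | ∃ (w : List (Fin n)) (k : ℕ), x = mono K w - mono K (w.rotate k)}

def commSet (K : Type) [Field K] (n : ℕ) : Set (FreePoly K n) :=
  {x : FreePoly K n | ∃ a b : FreePoly K n, x = a * b - b * a}

lemma rotSet_mem_commSpan {x : FreePoly K n} (hx : x ∈ rotSet K n) :
    x ∈ Submodule.span K (commSet K n) := by
  obtain ⟨w, k, rfl⟩ := hx
  apply Submodule.subset_span
  refine ⟨mono K (w.take (k % w.length)), mono K (w.drop (k % w.length)), ?_⟩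
  have hr : w.rotate k = w.drop (k % w.length) ++ w.take (k % w.length) := by
    rcases Nat.eq_zero_or_pos w.length with h | h
    · have : w = [] := List.length_eq_zero_iff.mp h
      subst this; simp
    · rw [← List.rotate_mod, List.rotate_eq_drop_append_take (le_of_lt (Nat.mod_lt _ h))]
  rw [mono_mul, mono_mul, List.take_append_drop, ← hr]

lemma commSpan_eq_rotSpan :
    Submodule.span K (commSet K n) = Submodule.span K (rotSet K n) := by
  apply le_antisymm
  · rw [Submodule.span_le]
    rintro x ⟨a, b, rfl⟩
    show a * b - b * a ∈ _
    induction a using MonoidAlgebra.induction_linear with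
    | zero => simp
    | add x y hx hy =>
      rw [add_mul, mul_add, SetLike.mem_coe]
      convert add_mem hx hy using 1
      abel
    | single u c =>
      induction b using MonoidAlgebra.induction_linear with
      | zero => simp
      | add x y hx hy =>
        rw [mul_add, add_mul, SetLike.mem_coe]
        convert add_mem hx hy using 1
        abel
      | single v d =>
        rw [single_eq_smul_mono u c, single_eq_smul_mono v d,
          smul_mul_assoc, mul_smul_comm, smul_mul_assoc, mul_smul_comm,
          smul_smul, smul_smul, mul_comm d c, ← smul_sub, mono_mul, mono_mul]
        apply Submodule.smul_mem
        have h : FreeMonoid.toList v ++ FreeMonoid.toList u =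
            (FreeMonoid.toList u ++ FreeMonoid.toList v).rotate (FreeMonoid.toList u).length := by
          rw [List.rotate_eq_drop_append_take (by simp)]; simp
        rw [h]
        exact Submodule.subset_span ⟨_, _, rfl⟩
  · rw [Submodule.span_le]
    intro x hx
    exact rotSet_mem_commSpan hx

lemma numOp_sub_cycSym_mem (P : FreePoly K n) :
    numOp P - cycSym P ∈ Submodule.span K (commSet K n) := by
  induction P using MonoidAlgebra.induction_linear with
  | zero => simp
  | add x y hx hy =>
    rw [map_add, map_add]
    convert add_mem hx hy using 1
    abel
  | single w c =>
    rw [single_eq_smul_mono, map_smul, map_smul, ← smul_sub]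
    apply Submodule.smul_mem
    rw [numOp_mono, cycSym_mono]
    have h : (FreeMonoid.toList w).length • mono K (FreeMonoid.toList w)
        = ∑ p ∈ Finset.range (FreeMonoid.toList w).length, mono K (FreeMonoid.toList w) := by
      rw [Finset.sum_const, Finset.card_range]
    rw [h, ← Finset.sum_sub_distrib]
    exact Submodule.sum_mem _ fun p _ => rotSet_mem_commSpan ⟨_, p + 1, rfl⟩

def invNumOp : FreePoly K n →ₗ[K] FreePoly K n :=
  (Finsupp.lsum K fun w => LinearMap.toSpanSingleton K _
    ((((FreeMonoid.toList w).length : K)⁻¹) • mono K (FreeMonoid.toList w))) ∘ₗ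
    (MonoidAlgebra.coeffLinearEquiv K).toLinearMap

lemma invNumOp_mono (w : List (Fin n)) :
    invNumOp (mono K w) = ((w.length : K)⁻¹ • mono K w) := by
  rw [invNumOp, mono, LinearMap.comp_apply, LinearEquiv.coe_coe]
  erw [Finsupp.lsum_single]
  simp [LinearMap.toSpanSingleton_apply, mono]

lemma sub_invNumOp_numOp_mem (P : FreePoly K n) :
    P - invNumOp (numOp P) ∈ Submodule.span K {(1 : FreePoly K n)} := by
  induction P using MonoidAlgebra.induction_linear with
  | zero => simp
  | add x y hx hy =>
    rw [map_add, map_add, ← sub_add_sub_comm]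
    exact add_mem hx hy
  | single w c =>
    rw [single_eq_smul_mono, map_smul, map_smul, ← smul_sub]
    apply Submodule.smul_mem
    rw [numOp_mono, map_nsmul, invNumOp_mono]
    rcases Nat.eq_zero_or_pos (FreeMonoid.toList w).length with h | h
    · rw [h]
      have h0 : FreeMonoid.toList w = [] := List.length_eq_zero_iff.mp h
      rw [h0]
      simp only [zero_smul, smul_zero, sub_zero]
      exact Submodule.subset_span rfl
    · have hne : ((FreeMonoid.toList w).length : K) ≠ 0 := Nat.cast_ne_zero.mpr h.ne'
      rw [← Nat.cast_smul_eq_nsmul K, smul_smul, mul_inv_cancel₀ hne, one_smul, sub_self]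
      exact zero_mem _

lemma invNumOp_maps_commSpan {x : FreePoly K n}
    (hx : x ∈ Submodule.span K (commSet K n)) :
    invNumOp x ∈ Submodule.span K (commSet K n) := by
  rw [commSpan_eq_rotSpan] at hx ⊢
  induction hx using Submodule.span_induction with
  | mem y hy =>
    obtain ⟨w, k, rfl⟩ := hy
    rw [map_sub, invNumOp_mono, invNumOp_mono, w.length_rotate k, ← smul_sub]
    exact Submodule.smul_mem _ _ (Submodule.subset_span ⟨w, k, rfl⟩)
  | zero => simp
  | add y z _ _ hy hz => rw [map_add]; exact add_mem hy hz
  | smul c y _ hy => rw [map_smul]; exact Submodule.smul_mem _ _ hy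

theorem cycSym_eq_zero_iff_mem_scalars_sup_commutators (P : FreePoly K n) :
    cycSym P = 0 ↔
      P ∈ Submodule.span K {(1 : FreePoly K n)} ⊔
        Submodule.span K {x : FreePoly K n | ∃ a b : FreePoly K n, x = a * b - b * a} := by
  constructor
  · intro h
    have h1 : numOp P ∈ Submodule.span K (commSet K n) := by
      have := numOp_sub_cycSym_mem P
      rwa [h, sub_zero] at this
    have h2 := invNumOp_maps_commSpan h1
    have h3 := sub_invNumOp_numOp_mem P
    rw [Submodule.mem_sup]
    exact ⟨P - invNumOp (numOp P), h3, invNumOp (numOp P), h2, by abel⟩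
  · intro h
    rw [Submodule.mem_sup] at h
    obtain ⟨y, hy, z, hz, rfl⟩ := h
    rw [map_add]
    have hy0 : cycSym y = 0 := by
      rw [Submodule.mem_span_singleton] at hy
      obtain ⟨c, rfl⟩ := hy
      rw [map_smul, cycSym_one, smul_zero]
    have hz0 : cycSym z = 0 := by
      induction hz using Submodule.span_induction with
      | mem x hx =>
        obtain ⟨a, b, rfl⟩ := hx
        rw [map_sub, cycSym_comm, sub_self]
      | zero => simp
      | add a b _ _ ha hb => rw [map_add, ha, hb, add_zero]
      | smul c a _ ha => rw [map_smul, ha, smul_zero]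
    rw [hy0, hz0, add_zero]
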